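/- Let M = (E, 𝓘) be a matroid on a finite ground set E, let X ⊆ {0,1}^E be the set of incidence vectors of the bases of M, and let 𝒞 be the class of all non-decreasing cost functions on X. Then for S ⊆ E the following are equivalent: (i) S is a controlling set for (X, 𝒞); (ii) S is an identifying set for X; (iii) |S ∩ C| ≥ |C| − 1 for every circuit C of M. -/

import Mathlib

/-- `S ⊆ E` is identifying for `X ⊆ ℝ^E`: any two distinct members of `X`
differ in some coordinate `e ∈ S`. -/
def Identifying {E : Type*} [Fintype E] (X : Set (E → ℝ)) (S : Set E) : Prop :=
  ∀ x ∈ X, ∀ y ∈ X, x ≠ y → ∃ e ∈ S, x e ≠ y e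

/-- `S ⊆ E` is controlling for `(X, C)`: for every cost function `c ∈ C` and every
`x* ∈ X` there is a vector `γ ∈ ℝ^S` (encoded as `γ : E → ℝ` vanishing outside `S`)
such that `x*` minimizes `x ↦ c x + ∑ e, γ e * x e` over `X`. -/
def Controlling {E : Type*} [Fintype E] (X : Set (E → ℝ))
    (C : Set ((E → ℝ) → ℝ)) (S : Set E) : Prop :=
  ∀ c ∈ C, ∀ xs ∈ X, ∃ γ : E → ℝ, (∀ e, e ∉ S → γ e = 0) ∧
    ∀ x ∈ X, c xs + ∑ e, γ e * xs e ≤ c x + ∑ e, γ e * x e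

/-- The set of incidence vectors of bases of the matroid `M`. -/
def basesX {E : Type*} [Fintype E] (M : Matroid E) : Set (E → ℝ) :=
  {x | ∃ B : Set E, M.IsBase B ∧ x = B.indicator fun _ => (1 : ℝ)}

/-- A circuit of the matroid `M`: a minimal dependent set (here with ground set
`M.E = univ`, so a set that is not independent while all its proper subsets are). -/
def IsCircuitOf {E : Type*} (M : Matroid E) (C : Set E) : Prop :=
  ¬ M.Indep C ∧ ∀ D : Set E, D ⊂ C → M.Indep D

open Set

lemma indicator_one_inj {E : Type*} {B B' : Set E}
    (h : B.indicator (fun _ => (1 : ℝ)) = B'.indicator (fun _ => (1 : ℝ))) : B = B' := by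
  ext e
  constructor
  · intro he
    have h1 := congrFun h e
    rw [Set.indicator_of_mem he] at h1
    by_contra h'
    rw [Set.indicator_of_notMem h'] at h1
    exact one_ne_zero h1
  · intro he
    have h1 := congrFun h e
    rw [Set.indicator_of_mem he] at h1
    by_contra h'
    rw [Set.indicator_of_notMem h'] at h1
    exact one_ne_zero h1.symm

/-- Every dependent set in a finite matroid contains a circuit. -/
lemma exists_circuitOf_subset {E : Type*} [Fintype E] (M : Matroid E) :
    ∀ n (D : Set E), D.ncard ≤ n → ¬ M.Indep D → ∃ C, C ⊆ D ∧ IsCircuitOf M C := by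
  intro n
  induction n with
  | zero =>
    intro D hcard hdep
    rw [Nat.le_zero, Set.ncard_eq_zero] at hcard
    exact absurd (hcard ▸ M.empty_indep) hdep
  | succ n ih =>
    intro D hcard hdep
    by_cases h : ∀ D' : Set E, D' ⊂ D → M.Indep D'
    · exact ⟨D, subset_rfl, hdep, h⟩
    · push_neg at h
      obtain ⟨D', hss, hdep'⟩ := h
      obtain ⟨C, hC1, hC2⟩ := ih D' (by
        have := Set.ncard_lt_ncard hss (Set.toFinite D); omega) hdep'
      exact ⟨C, hC1.trans hss.subset, hC2⟩

/-- The key exchange construction: from a circuit `C` and two distinct elements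
`e f ∈ C` we get a base `B₁` containing `e` but not `f` such that
`insert f (B₁ \ {e})` is also a base. -/
lemma circuit_exchange {E : Type*} [Fintype E] {M : Matroid E} (hME : M.E = Set.univ)
    {C : Set E} (hC : IsCircuitOf M C) {e f : E} (he : e ∈ C) (hf : f ∈ C) (hef : e ≠ f) :
    ∃ B₁ : Set E, M.IsBase B₁ ∧ e ∈ B₁ ∧ f ∉ B₁ ∧ M.IsBase (insert f (B₁ \ {e})) := by
  have hground : ∀ X : Set E, X ⊆ M.E := fun X => hME ▸ Set.subset_univ X
  have hCf : M.Indep (C \ {f}) := hC.2 _ (Set.sdiff_singleton_ssubset.2 hf)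
  have hCe : M.Indep (C \ {e}) := hC.2 _ (Set.sdiff_singleton_ssubset.2 he)
  obtain ⟨B₁, hB₁, hCB₁⟩ := hCf.exists_isBase_superset
  have heB₁ : e ∈ B₁ := hCB₁ ⟨he, hef⟩
  have hfB₁ : f ∉ B₁ := by
    intro hfB₁
    exact hC.1 (hB₁.indep.subset (fun x hx => by
      by_cases hxf : x = f
      · exact hxf ▸ hfB₁
      · exact hCB₁ ⟨hx, hxf⟩))
  set B₂ : Set E := insert f (B₁ \ {e}) with hB₂def
  -- `e` lies in the closure of `C \ {e}`, which is a subset of B₂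
  have hCeB₂ : C \ {e} ⊆ B₂ := by
    intro x hx
    by_cases hxf : x = f
    · exact hxf ▸ Set.mem_insert f _
    · exact Set.mem_insert_of_mem _ ⟨hCB₁ ⟨hx.1, hxf⟩, hx.2⟩
  have hecl : e ∈ M.closure (C \ {e}) := by
    have hdep : M.Dep (insert e (C \ {e})) := by
      rw [Set.insert_diff_singleton, Set.insert_eq_self.2 he]
      exact ⟨hC.1, hground C⟩
    exact ((hCe.insert_dep_iff).1 hdep).1
  -- B₂ is spanning
  have hspan : M.Spanning B₂ := by
    have hB₁cl : B₁ ⊆ M.closure B₂ := by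
      intro x hx
      by_cases hxe : x = e
      · exact hxe ▸ (M.closure_subset_closure hCeB₂) hecl
      · exact (M.subset_closure B₂ (hground B₂)) (Set.mem_insert_of_mem _ ⟨hx, hxe⟩)
    have : M.E ⊆ M.closure B₂ := by
      rw [← hB₁.closure_eq]
      calc M.closure B₁ ⊆ M.closure (M.closure B₂) := M.closure_subset_closure hB₁cl
        _ = M.closure B₂ := M.closure_closure B₂
    rw [Matroid.spanning_iff_closure_eq (hground B₂)]
    exact ((M.closure_subset_ground B₂).antisymm this).symm ▸ rfl
  obtain ⟨B₃, hB₃, hB₃sub⟩ := (Matroid.spanning_iff_exists_isBase_subset (hground B₂)).1 hspan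
  have hcard : B₂.encard ≤ B₃.encard := by
    calc B₂.encard ≤ (B₁ \ {e}).encard + 1 := Set.encard_insert_le _ _
      _ = B₁.encard := Set.encard_diff_singleton_add_one heB₁
      _ = B₃.encard := hB₁.encard_eq_encard_of_isBase hB₃
  have heq : B₃ = B₂ := (Set.toFinite B₂).eq_of_subset_of_encard_le' hB₃sub hcard
  have hB₂base : M.IsBase B₂ := by rw [← heq]; exact hB₃
  exact ⟨B₁, hB₁, heB₁, hfB₁, hB₂base⟩

theorem stmt15 {E : Type*} [Fintype E] (M : Matroid E) (hME : M.E = Set.univ)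
    (S : Set E) :
    (Controlling (basesX M) {c | Monotone c} S ↔ Identifying (basesX M) S) ∧
    (Identifying (basesX M) S ↔
      ∀ C : Set E, IsCircuitOf M C → C.ncard ≤ (S ∩ C).ncard + 1) := by
  classical
  have hground : ∀ X : Set E, X ⊆ M.E := fun X => hME ▸ Set.subset_univ X
  have hfin : (basesX M).Finite := Set.Finite.subset
    (Set.finite_range (fun B : Set E => B.indicator fun _ => (1 : ℝ)))
    (by rintro x ⟨B, hB, rfl⟩; exact ⟨B, rfl⟩)
  constructor
  · -- Controlling ↔ Identifying
    constructor
    · -- Controlling → Identifying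
      intro hcon x hx y hy hxy
      obtain ⟨B, hB, rfl⟩ := hx
      obtain ⟨B', hB', rfl⟩ := hy
      by_contra hno
      push_neg at hno
      set c : (E → ℝ) → ℝ := fun z => ∑ e ∈ (Set.toFinite (B \ B')).toFinset, z e with hc
      have hmono : Monotone c := fun u v huv => Finset.sum_le_sum (fun i _ => huv i)
      obtain ⟨γ, hγ0, hmin⟩ := hcon c hmono _ ⟨B, hB, rfl⟩
      have hkey := hmin _ ⟨B', hB', rfl⟩
      have hsum : ∑ e, γ e * (B.indicator (fun _ => (1 : ℝ))) e
          = ∑ e, γ e * (B'.indicator (fun _ => (1 : ℝ))) e := by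
        apply Finset.sum_congr rfl
        intro i _
        by_cases hiS : i ∈ S
        · rw [hno i hiS]
        · rw [hγ0 i hiS]; ring
      rw [hsum] at hkey
      have hkey2 : c (B.indicator fun _ => (1 : ℝ)) ≤ c (B'.indicator fun _ => (1 : ℝ)) :=
        le_of_add_le_add_right hkey
      have hcB : c (B.indicator fun _ => (1 : ℝ))
          = ((Set.toFinite (B \ B')).toFinset.card : ℝ) := by
        rw [hc]
        simp only []
        rw [Finset.sum_congr rfl (fun i hi => Set.indicator_of_mem
          ((Set.Finite.mem_toFinset _).1 hi).1 (fun _ => (1 : ℝ)))]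
        simp
      have hcB' : c (B'.indicator fun _ => (1 : ℝ)) = 0 := by
        rw [hc]
        simp only []
        rw [Finset.sum_congr rfl (fun i hi => Set.indicator_of_notMem
          ((Set.Finite.mem_toFinset _).1 hi).2 (fun _ => (1 : ℝ)))]
        simp
      have hBB' : B ≠ B' := fun h => hxy (h ▸ rfl)
      have hBdiff : (B \ B').Nonempty := by
        rw [Set.nonempty_iff_ne_empty]
        intro h
        rw [Set.diff_eq_empty] at h
        exact hBB' (hB.eq_of_subset_isBase hB' h)
      have hpos : 0 < (Set.toFinite (B \ B')).toFinset.card := by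
        rw [Finset.card_pos]
        obtain ⟨e, he⟩ := hBdiff
        exact ⟨e, (Set.Finite.mem_toFinset _).2 he⟩
      rw [hcB, hcB'] at hkey2
      have : (0 : ℝ) < (Set.toFinite (B \ B')).toFinset.card := by exact_mod_cast hpos
      linarith
    · -- Identifying → Controlling
      intro hid c hcmono xs hxs
      obtain ⟨Bs, hBs, hxseq⟩ := hxs
      obtain ⟨N, hN⟩ := (hfin.image (fun x => c xs - c x)).bddAbove
      set N' : ℝ := max N 0 + 1 with hN'def
      have hN'pos : 0 < N' := by
        have := le_max_right N 0
        simp only [hN'def]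
        linarith
      refine ⟨fun e => if e ∈ S then (if e ∈ Bs then -N' else N') else 0,
        fun e he => by simp [he], ?_⟩
      intro x hx
      by_cases hxx : x = xs
      · rw [hxx]
      obtain ⟨B, hB, hxeq⟩ := hx
      obtain ⟨e₀, he₀S, he₀⟩ := hid xs ⟨Bs, hBs, hxseq⟩ x ⟨B, hB, hxeq⟩ (fun h => hxx h.symm)
      set γ : E → ℝ := fun e => if e ∈ S then (if e ∈ Bs then -N' else N') else 0 with hγdef
      have hval : ∀ (A : Set E) (e : E), A.indicator (fun _ => (1 : ℝ)) e
          = if e ∈ A then 1 else 0 := by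
        intro A e
        by_cases h : e ∈ A
        · rw [Set.indicator_of_mem h]; simp [h]
        · rw [Set.indicator_of_notMem h]; simp [h]
      have hterm : ∀ e, 0 ≤ γ e * x e - γ e * xs e := by
        intro e
        rw [hγdef, hxeq, hxseq, hval, hval]
        by_cases h1 : e ∈ S <;> by_cases h2 : e ∈ Bs <;> by_cases h3 : e ∈ B <;>
          simp [h1, h2, h3] <;> linarith
      have hterm0 : N' ≤ γ e₀ * x e₀ - γ e₀ * xs e₀ := by
        rw [hxeq, hxseq] at he₀ ⊢
        rw [hγdef, hval, hval]
        rw [hval, hval] at he₀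
        by_cases h2 : e₀ ∈ Bs <;> by_cases h3 : e₀ ∈ B <;>
          first
          | (simp [he₀S, h2, h3] at he₀ ⊢; linarith)
          | simp [he₀S, h2, h3] at he₀ ⊢
      have hsum : N' ≤ ∑ e, γ e * x e - ∑ e, γ e * xs e := by
        rw [← Finset.sum_sub_distrib]
        calc N' ≤ γ e₀ * x e₀ - γ e₀ * xs e₀ := hterm0
          _ ≤ ∑ e, (γ e * x e - γ e * xs e) :=
            Finset.single_le_sum (fun i _ => hterm i) (Finset.mem_univ e₀)
      have hNx : c xs - c x ≤ N := hN (Set.mem_image_of_mem _ ⟨B, hB, hxeq⟩)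
      have hNN' : N < N' := by
        have := le_max_left N 0
        simp only [hN'def]
        linarith
      linarith
  · -- Identifying ↔ circuit condition
    constructor
    · intro hid C hC
      by_contra hcard
      have hsplit : (C ∩ S).ncard + (C \ S).ncard = C.ncard :=
        Set.ncard_inter_add_ncard_diff_eq_ncard C S (Set.toFinite C)
      have hSC : (S ∩ C).ncard = (C ∩ S).ncard := by rw [Set.inter_comm]
      have h2 : 1 < (C \ S).ncard := by omega
      obtain ⟨e, f, heCS, hfCS, hef⟩ := (Set.one_lt_ncard_iff (Set.toFinite _)).1 h2
      obtain ⟨B₁, hB₁, heB₁, hfB₁, hB₂⟩ := circuit_exchange hME hC heCS.1 hfCS.1 hef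
      have hxy : B₁.indicator (fun _ => (1 : ℝ))
          ≠ (insert f (B₁ \ {e})).indicator (fun _ => (1 : ℝ)) := by
        intro h
        have h2 := indicator_one_inj h
        exact hfB₁ (h2 ▸ Set.mem_insert f _)
      obtain ⟨s, hsS, hs⟩ := hid _ ⟨B₁, hB₁, rfl⟩ _ ⟨_, hB₂, rfl⟩ hxy
      have hse : s ≠ e := fun h => heCS.2 (h ▸ hsS)
      have hsf : s ≠ f := fun h => hfCS.2 (h ▸ hsS)
      apply hs
      have hiff : s ∈ B₁ ↔ s ∈ insert f (B₁ \ {e}) := by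
        simp [Set.mem_insert_iff, hse, hsf]
      by_cases hsB : s ∈ B₁
      · rw [Set.indicator_of_mem hsB, Set.indicator_of_mem (hiff.1 hsB)]
      · rw [Set.indicator_of_notMem hsB,
          Set.indicator_of_notMem (fun h => hsB (hiff.2 h))]
    · intro hcond x hx y hy hxy
      obtain ⟨B, hB, rfl⟩ := hx
      obtain ⟨B', hB', rfl⟩ := hy
      by_contra hno
      push_neg at hno
      have hSmem : ∀ s ∈ S, (s ∈ B ↔ s ∈ B') := by
        intro s hs
        have h1 := hno s hs
        constructor
        · intro h
          by_contra h'
          rw [Set.indicator_of_mem h, Set.indicator_of_notMem h'] at h1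
          exact one_ne_zero h1
        · intro h
          by_contra h'
          rw [Set.indicator_of_notMem h', Set.indicator_of_mem h] at h1
          exact one_ne_zero h1.symm
      have hBB' : B ≠ B' := fun h => hxy (h ▸ rfl)
      have hBdiff : (B \ B').Nonempty := by
        rw [Set.nonempty_iff_ne_empty]
        intro h
        rw [Set.diff_eq_empty] at h
        exact hBB' (hB.eq_of_subset_isBase hB' h)
      obtain ⟨e, heB, heB'⟩ := hBdiff
      have hdep : M.Dep (insert e B') := hB'.insert_dep ⟨hME ▸ Set.mem_univ e, heB'⟩
      obtain ⟨C, hCsub, hC⟩ :=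
        exists_circuitOf_subset M (insert e B').ncard _ le_rfl hdep.not_indep
      have heC : e ∈ C := by
        by_contra h
        exact hC.1 (hB'.indep.subset (fun z hz =>
          (Set.mem_insert_iff.1 (hCsub hz)).resolve_left (fun hh => h (hh ▸ hz))))
      have heS : e ∉ S := fun h => heB' ((hSmem e h).1 heB)
      have hle : (C \ S).ncard ≤ 1 := by
        have hsplit : (C ∩ S).ncard + (C \ S).ncard = C.ncard :=
          Set.ncard_inter_add_ncard_diff_eq_ncard C S (Set.toFinite C)
        have h1 := hcond C hC
        have hSC : (S ∩ C).ncard = (C ∩ S).ncard := by rw [Set.inter_comm]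
        omega
      have hCB : C ⊆ B := by
        intro g hg
        by_cases hge : g = e
        · exact hge ▸ heB
        · have hgS : g ∈ S := by
            by_contra hgS
            have h2 : 1 < (C \ S).ncard :=
              (Set.one_lt_ncard_iff (Set.toFinite _)).2
                ⟨e, g, ⟨heC, heS⟩, ⟨hg, hgS⟩, fun h => hge h.symm⟩
            omega
          have hgB' : g ∈ B' := (Set.mem_insert_iff.1 (hCsub hg)).resolve_left hge
          exact (hSmem g hgS).2 hgB'
      exact hC.1 (hB.indep.subset hCB)
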